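/- Let B ⊆ ℝ^q be a polyhedron. Then Φ is an inclusion-invariant one-to-one map between the set of all nonempty faces F of B and the set of all faces E of Φ(B) with the property E ⊄ 0⁺B × {0} (inclusion-invariant means F₁ ⊆ F₂ ⟺ Φ(F₁) ⊆ Φ(F₂)); the inverse map is E ↦ p[E ∩ (B × {1})], where p(y) := (y₁,…,y_q); and for every nonempty face F of B one has dim Φ(F) = dim F + 1. -/

import Mathlib

open Matrix Set Pointwise

noncomputable section

/-- `cone B = {l • x : l ≥ 0, x ∈ conv B}` -/
def coneOf {E : Type*} [AddCommGroup E] [Module ℝ E] (B : Set E) : Set E :=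
  {y | ∃ l : ℝ, 0 ≤ l ∧ ∃ x ∈ convexHull ℝ B, y = l • x}

/-- `F` is a face of the convex set `B`. -/
def IsFaceOf {E : Type*} [AddCommGroup E] [Module ℝ E] (F B : Set E) : Prop :=
  Convex ℝ F ∧ F ⊆ B ∧
    ∀ y ∈ B, ∀ z ∈ B, ∀ l : ℝ, 0 < l → l < 1 → l • y + (1 - l) • z ∈ F → y ∈ F ∧ z ∈ F

/-- recession cone `0⁺B` of a convex set. -/
def recCone {E : Type*} [AddCommGroup E] [Module ℝ E] (B : Set E) : Set E :=
  {d | ∀ x ∈ B, ∀ t : ℝ, 0 ≤ t → x + t • d ∈ B}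

/-- lineality space `L(B) = 0⁺B ∩ (−0⁺B)`. -/
def linealOf {E : Type*} [AddCommGroup E] [Module ℝ E] (B : Set E) : Set E :=
  recCone B ∩ -recCone B

/-- dimension of (the affine hull of) a set. -/
def sdim {E : Type*} [AddCommGroup E] [Module ℝ E] (B : Set E) : ℕ :=
  Module.finrank ℝ (vectorSpan ℝ B)

def IsPolyhedron {d : ℕ} (B : Set (Fin d → ℝ)) : Prop :=
  ∃ (k : ℕ) (W : Matrix (Fin k) (Fin d) ℝ) (v : Fin k → ℝ), B = {x | v ≤ W.mulVec x}

/-- orthogonal complement (as a set) of a set of vectors. -/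
def orthSet {d : ℕ} (L : Set (Fin d → ℝ)) : Set (Fin d → ℝ) :=
  {y | ∀ z ∈ L, y ⬝ᵥ z = 0}

/-- polar cone `K° = {w : ∀ y ∈ K, wᵀy ≤ 0}`. -/
def polarCone {d : ℕ} (K : Set (Fin d → ℝ)) : Set (Fin d → ℝ) :=
  {w | ∀ y ∈ K, w ⬝ᵥ y ≤ 0}

/-- the last index of `Fin q` (1-based index `q`). -/
def lastIdx (q : ℕ) (hq : 0 < q) : Fin q := ⟨q - 1, by omega⟩

/-- `y ↦ (y,1)`. -/
def lift1 {q : ℕ} (y : Fin q → ℝ) : Fin (q + 1) → ℝ := Fin.snoc y 1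

/-- `y ↦ (y,0)`. -/
def lift0 {q : ℕ} (y : Fin q → ℝ) : Fin (q + 1) → ℝ := Fin.snoc y 0

/-- `p(y) = (y₁,…,y_q)`. -/
def projq {q : ℕ} (y : Fin (q + 1) → ℝ) : Fin q → ℝ := fun i => y i.castSucc

/-- `Φ(B) = cl cone (B × {1})`. -/
def PhiMap {q : ℕ} (B : Set (Fin q → ℝ)) : Set (Fin (q + 1) → ℝ) :=
  closure (coneOf (lift1 '' B))

/-- the block matrix `G = (A; −ZᵀP; 0)`. -/
def Gmat {m n q r : ℕ} (A : Matrix (Fin m) (Fin n) ℝ) (P : Matrix (Fin q) (Fin n) ℝ)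
    (Z : Matrix (Fin q) (Fin r) ℝ) : Matrix (Fin (m + r + 1)) (Fin n) ℝ :=
  fun i j =>
    if h : (i : ℕ) < m then A ⟨i, h⟩ j
    else if h2 : (i : ℕ) < m + r then -(∑ l : Fin q, Z l ⟨(i : ℕ) - m, by omega⟩ * P l j)
    else 0

/-- the block matrix `H` with rows `(0, −b)`, `(Zᵀ, 0)` and `(0,…,0,1)`. -/
def Hmat {m q r : ℕ} (b : Fin m → ℝ) (Z : Matrix (Fin q) (Fin r) ℝ) :
    Matrix (Fin (m + r + 1)) (Fin (q + 1)) ℝ :=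
  fun i j =>
    if h : (i : ℕ) < m then (if (j : ℕ) = q then -b ⟨i, h⟩ else 0)
    else if h2 : (i : ℕ) < m + r then
      (if hj : (j : ℕ) < q then Z ⟨j, hj⟩ ⟨(i : ℕ) - m, by omega⟩ else 0)
    else (if (j : ℕ) = q then 1 else 0)

/-- dual objective `D(u,w) = (w₁,…,w_{q−1}, bᵀu)`. -/
def Dmap {m q : ℕ} (b : Fin m → ℝ) (uw : (Fin m → ℝ) × (Fin q → ℝ)) : Fin q → ℝ :=
  fun i => if (i : ℕ) < q - 1 then uw.2 i else b ⬝ᵥ uw.1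

/-- `R* = {v : v₁ = ⋯ = v_{q−1} = 0, v_q ≥ 0}`. -/
def RstarSet (q : ℕ) (hq : 0 < q) : Set (Fin q → ℝ) :=
  {v | (∀ i : Fin q, (i : ℕ) < q - 1 → v i = 0) ∧ 0 ≤ v (lastIdx q hq)}

/-- dual feasible set `T`. -/
def Tset {m n q r : ℕ} (A : Matrix (Fin m) (Fin n) ℝ) (P : Matrix (Fin q) (Fin n) ℝ)
    (Z : Matrix (Fin q) (Fin r) ℝ) (cbar : Fin q → ℝ) :
    Set ((Fin m → ℝ) × (Fin q → ℝ)) :=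
  {uw | ∃ v : Fin r → ℝ, 0 ≤ v ∧ uw.2 = Z.mulVec v ∧
    Aᵀ.mulVec uw.1 = Pᵀ.mulVec uw.2 ∧ cbar ⬝ᵥ uw.2 = 1 ∧ 0 ≤ uw.1}

/-- `φ(y,w) = Σ_{i<q} y_i w_i + y_q (1 − Σ_{i<q} c̄_i w_i) − w_q`. -/
def phiFn {q : ℕ} (hq : 0 < q) (cbar : Fin q → ℝ) (y w : Fin q → ℝ) : ℝ :=
  (∑ i : Fin q, if (i : ℕ) < q - 1 then y i * w i else 0)
    + y (lastIdx q hq) * (1 - ∑ i : Fin q, if (i : ℕ) < q - 1 then cbar i * w i else 0)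
    - w (lastIdx q hq)

/-- duality map `Ψ(F*) = ⋂_{w ∈ F*} {y ∈ Pset : φ(y,w) = 0}`. -/
def PsiMap {q : ℕ} (hq : 0 < q) (cbar : Fin q → ℝ) (Pset : Set (Fin q → ℝ))
    (Fstar : Set (Fin q → ℝ)) : Set (Fin q → ℝ) :=
  ⋂ w ∈ Fstar, {y ∈ Pset | phiFn hq cbar y w = 0}

/-- `My = (−y₁,…,−y_{q−1}, c̄₁y₁+⋯+c̄_{q−1}y_{q−1} − y_{q+1}, y_q)`. -/
def Mmap {q : ℕ} (hq : 0 < q) (cbar : Fin q → ℝ) (y : Fin (q + 1) → ℝ) : Fin (q + 1) → ℝ :=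
  fun i =>
    if (i : ℕ) < q - 1 then -y i
    else if (i : ℕ) = q - 1 then
      (∑ j : Fin q, if (j : ℕ) < q - 1 then cbar j * y j.castSucc else 0) - y (Fin.last q)
    else y ((lastIdx q hq).castSucc)

/-- `M⁻¹w = (−w₁,…,−w_{q−1}, w_{q+1}, −cᵀw)` where `c = (c̄,0)`. -/
def MinvMap {q : ℕ} (cbar : Fin q → ℝ) (w : Fin (q + 1) → ℝ) : Fin (q + 1) → ℝ :=
  fun i =>
    if (i : ℕ) < q - 1 then -w i
    else if (i : ℕ) = q - 1 then w (Fin.last q)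
    else -((Fin.snoc cbar 0 : Fin (q + 1) → ℝ) ⬝ᵥ w)

/-- `p*(w) = (w₁,…,w_{q−1},w_{q+1})`. -/
def pstarMap {q : ℕ} (w : Fin (q + 1) → ℝ) : Fin q → ℝ :=
  fun i => if (i : ℕ) < q - 1 then w i.castSucc else w (Fin.last q)

/-- `y` generates an extreme ray of the pointed convex cone `Q`. -/
def IsExtremeDir {E : Type*} [AddCommGroup E] [Module ℝ E] (Q : Set E) (y : E) : Prop :=
  y ∈ Q ∧ y ≠ 0 ∧ IsFaceOf (coneOf {y}) Q

/-- `σ(u,w) = (u¹, −p(w))` where `u = (u¹,u²,u³) ∈ ℝ^m×ℝ^r×ℝ`. -/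
def sigmaMap {m q r : ℕ} (uw : (Fin (m + r + 1) → ℝ) × (Fin (q + 1) → ℝ)) :
    (Fin m → ℝ) × (Fin q → ℝ) :=
  (fun i => uw.1 (Fin.castLE (by omega) i), -projq uw.2)

namespace S4

open Matrix Set Pointwise Filter Topology

variable {q : ℕ}

@[simp] lemma lift1_last (y : Fin q → ℝ) : lift1 y (Fin.last q) = 1 := by simp [lift1]
@[simp] lemma lift1_castSucc (y : Fin q → ℝ) (i : Fin q) : lift1 y i.castSucc = y i := by
  simp [lift1]
@[simp] lemma lift0_last (y : Fin q → ℝ) : lift0 y (Fin.last q) = 0 := by simp [lift0]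
@[simp] lemma lift0_castSucc (y : Fin q → ℝ) (i : Fin q) : lift0 y i.castSucc = y i := by
  simp [lift0]
@[simp] lemma projq_lift1 (y : Fin q → ℝ) : projq (lift1 y) = y :=
  funext fun i => lift1_castSucc y i
@[simp] lemma projq_lift0 (y : Fin q → ℝ) : projq (lift0 y) = y :=
  funext fun i => lift0_castSucc y i

lemma ext_fin {p r : Fin (q + 1) → ℝ} (h1 : ∀ i : Fin q, p i.castSucc = r i.castSucc)
    (h2 : p (Fin.last q) = r (Fin.last q)) : p = r :=
  funext (Fin.lastCases h2 h1)

lemma lift1_combo {a b : ℝ} (hab : a + b = 1) (y z : Fin q → ℝ) :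
    a • lift1 y + b • lift1 z = lift1 (a • y + b • z) := by
  refine ext_fin (fun i => ?_) ?_ <;> simp [hab]

lemma lift1_image_convex {C : Set (Fin q → ℝ)} (hC : Convex ℝ C) : Convex ℝ (lift1 '' C) := by
  rintro _ ⟨y, hy, rfl⟩ _ ⟨z, hz, rfl⟩ a b ha hb hab
  exact ⟨a • y + b • z, hC hy hz ha hb hab, (lift1_combo hab y z).symm⟩

lemma mem_coneL {C : Set (Fin q → ℝ)} (hC : Convex ℝ C) {p : Fin (q + 1) → ℝ} :
    p ∈ coneOf (lift1 '' C) ↔ ∃ l : ℝ, 0 ≤ l ∧ ∃ y ∈ C, p = l • lift1 y := by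
  unfold coneOf
  rw [mem_setOf_eq, (lift1_image_convex hC).convexHull_eq]
  constructor
  · rintro ⟨l, hl, _, ⟨y, hy, rfl⟩, rfl⟩; exact ⟨l, hl, y, hy, rfl⟩
  · rintro ⟨l, hl, y, hy, rfl⟩; exact ⟨l, hl, lift1 y, ⟨y, hy, rfl⟩, rfl⟩

lemma coneOf_mono {E : Type*} [AddCommGroup E] [Module ℝ E] {S T : Set E} (h : S ⊆ T) :
    coneOf S ⊆ coneOf T := by
  rintro p ⟨l, hl, x, hx, rfl⟩
  exact ⟨l, hl, x, convexHull_mono h hx, rfl⟩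

lemma phiMap_mono {S T : Set (Fin q → ℝ)} (h : S ⊆ T) : PhiMap S ⊆ PhiMap T :=
  closure_mono (coneOf_mono (image_mono (f := lift1) h))

lemma coneL_convex {C : Set (Fin q → ℝ)} (hC : Convex ℝ C) : Convex ℝ (coneOf (lift1 '' C)) := by
  intro p hp p' hp' a b ha hb hab
  rw [mem_coneL hC] at hp hp' ⊢
  obtain ⟨l, hl, y, hy, rfl⟩ := hp
  obtain ⟨l', hl', y', hy', rfl⟩ := hp'
  rcases eq_or_lt_of_le (by positivity : (0:ℝ) ≤ a * l + b * l') with h0 | h0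
  · have h1 : a * l = 0 ∧ b * l' = 0 := by
      constructor <;> nlinarith [mul_nonneg ha hl, mul_nonneg hb hl']
    refine ⟨0, le_refl _, y, hy, ?_⟩
    rw [smul_smul, smul_smul, h1.1, h1.2]; simp
  · set L := a * l + b * l' with hL
    refine ⟨L, le_of_lt h0, (a * l / L) • y + (b * l' / L) • y',
      hC hy hy' (by positivity) (by positivity) (by field_simp; exact hL.symm), ?_⟩
    refine ext_fin (fun i => ?_) ?_ <;>
      simp only [Pi.add_apply, Pi.smul_apply, lift1_castSucc, lift1_last, smul_eq_mul]
    · field_simp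
    · field_simp; exact hL.symm

lemma poly_convex {d : ℕ} {B : Set (Fin d → ℝ)} (hB : IsPolyhedron B) : Convex ℝ B := by
  obtain ⟨k, W, v, rfl⟩ := hB
  intro x hx y hy a b ha hb hab
  simp only [mem_setOf_eq, Pi.le_def] at hx hy ⊢
  intro i
  rw [Matrix.mulVec_add, Matrix.mulVec_smul, Matrix.mulVec_smul]
  simp only [Pi.add_apply, Pi.smul_apply, smul_eq_mul]
  have hv : a * v i + b * v i = v i := by rw [← add_mul, hab, one_mul]
  linarith [mul_le_mul_of_nonneg_left (hx i) ha, mul_le_mul_of_nonneg_left (hy i) hb]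

lemma poly_closed {d : ℕ} {B : Set (Fin d → ℝ)} (hB : IsPolyhedron B) : IsClosed B := by
  obtain ⟨k, W, v, rfl⟩ := hB
  have : {x : Fin d → ℝ | v ≤ W.mulVec x} = ⋂ i, {x | v i ≤ W.mulVec x i} := by
    ext x; simp [Pi.le_def, mem_iInter]
  rw [this]
  refine isClosed_iInter fun i => isClosed_le continuous_const ?_
  simp only [Matrix.mulVec, dotProduct]
  exact continuous_finset_sum _ fun j _ => continuous_const.mul (continuous_apply j)

lemma zero_mem_recCone {E : Type*} [AddCommGroup E] [Module ℝ E] (C : Set E) :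
    (0 : E) ∈ recCone C := fun x hx t _ => by simpa using hx

lemma recCone_smul {E : Type*} [AddCommGroup E] [Module ℝ E] {C : Set E} {d : E}
    (hd : d ∈ recCone C) {c : ℝ} (hc : 0 ≤ c) : c • d ∈ recCone C := fun x hx t ht => by
  rw [smul_smul]; exact hd x hx _ (mul_nonneg ht hc)

lemma recCone_of_ray {n : ℕ} {C : Set (Fin n → ℝ)} (hCc : IsClosed C) (hC : Convex ℝ C)
    {x d : Fin n → ℝ} (hx : x ∈ C) (h : ∀ t : ℝ, 0 ≤ t → x + t • d ∈ C) : d ∈ recCone C := by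
  intro x' hx' t ht
  have hmem : ∀ n : ℕ, x' + t • d + (1 / ((n : ℝ) + 1)) • (x - x') ∈ C := by
    intro n
    have hn : (0:ℝ) < (n : ℝ) + 1 := by positivity
    have h1 : (0:ℝ) ≤ 1 / ((n : ℝ) + 1) := by positivity
    have h2 : (0:ℝ) ≤ 1 - 1 / ((n : ℝ) + 1) := by
      rw [sub_nonneg, div_le_one hn]; linarith
    have := hC hx' (h (((n : ℝ) + 1) * t) (by positivity)) h2 h1 (by ring)
    convert this using 1
    funext i
    simp only [Pi.add_apply, Pi.smul_apply, Pi.sub_apply, smul_eq_mul]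
    field_simp; ring
  have htend : Tendsto (fun n : ℕ => x' + t • d + (1 / ((n : ℝ) + 1)) • (x - x')) atTop
      (𝓝 (x' + t • d)) := by
    have h0 : Tendsto (fun n : ℕ => (1 / ((n : ℝ) + 1))) atTop (𝓝 0) :=
      tendsto_one_div_add_atTop_nhds_zero_nat
    have h1 : Tendsto (fun n : ℕ => (x' + t • d) + (1 / ((n : ℝ) + 1)) • (x - x')) atTop
        (𝓝 ((x' + t • d) + (0 : ℝ) • (x - x'))) :=
      Tendsto.add tendsto_const_nhds (h0.smul_const (x - x'))
    simpa using h1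
  exact hCc.mem_of_tendsto htend (Eventually.of_forall hmem)

lemma recCone_subset {n : ℕ} {B F : Set (Fin n → ℝ)} (hBc : IsClosed B) (hB : Convex ℝ B)
    (hFB : F ⊆ B) (hne : F.Nonempty) : recCone F ⊆ recCone B := by
  obtain ⟨x, hx⟩ := hne
  exact fun d hd => recCone_of_ray hBc hB (hFB hx) fun t ht => hFB (hd x hx t ht)

end S4
namespace S4

open Matrix Set Pointwise Filter Topology

variable {n : ℕ}

lemma combo_ray {x d : Fin n → ℝ} {l s t : ℝ} (hl : l * t = s) :
    l • (x + t • d) + (1 - l) • x = x + s • d := by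
  funext i
  simp only [Pi.add_apply, Pi.smul_apply, smul_eq_mul, ← hl]
  ring

lemma faceA {B F : Set (Fin n → ℝ)} (hF : IsFaceOf F B) {x d : Fin n → ℝ}
    (hx : x ∈ B) (hd : d ∈ recCone B) {s : ℝ} (hs : 0 < s) (hm : x + s • d ∈ F) :
    x ∈ F ∧ ∀ t : ℝ, 0 ≤ t → x + t • d ∈ F := by
  have h2B : x + (2 * s) • d ∈ B := hd x hx _ (by positivity)
  have hkey : ((1:ℝ)/2) • (x + (2 * s) • d) + (1 - (1:ℝ)/2) • x = x + s • d :=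
    combo_ray (by ring)
  have hface := hF.2.2 _ h2B _ hx (1/2) (by norm_num) (by norm_num) (hkey ▸ hm)
  refine ⟨hface.2, fun t ht => ?_⟩
  rcases le_or_gt t (2 * s) with hts | hts
  · -- convex combination of x and x + (2s) d
    have h0 : (0:ℝ) < 2 * s := by positivity
    have ha : (0:ℝ) ≤ 1 - t / (2 * s) := by rw [sub_nonneg, div_le_one h0]; linarith
    have hb : (0:ℝ) ≤ t / (2 * s) := by positivity
    have := hF.1 hface.2 hface.1 ha hb (by ring)
    convert this using 1
    funext i
    simp only [Pi.add_apply, Pi.smul_apply, smul_eq_mul]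
    field_simp; ring
  · -- use face property with the far point
    have htpos : (0:ℝ) < t := by linarith
    have hB2 : x + t • d ∈ B := hd x hx t ht
    have hcombo : (s / t) • (x + t • d) + (1 - s / t) • x = x + s • d :=
      combo_ray (by field_simp)
    exact (hF.2.2 _ hB2 _ hx (s / t) (div_pos hs htpos)
      (by rw [div_lt_one htpos]; linarith) (hcombo ▸ hm)).1

lemma faceA_rec {B F : Set (Fin n → ℝ)} (hF : IsFaceOf F B) {x d : Fin n → ℝ}
    (hx : x ∈ F) (hd : d ∈ recCone B) (hray : ∀ t : ℝ, 0 ≤ t → x + t • d ∈ F) :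
    d ∈ recCone F := by
  intro x' hx' t ht
  have hxB' : x' + t • d ∈ B := hd x' (hF.2.1 hx') t ht
  have hmid : ((1:ℝ)/2) • (x' + t • d) + (1 - (1:ℝ)/2) • x = ((1:ℝ)/2) • x' + (1 - (1:ℝ)/2) • (x + t • d) := by
    funext i; simp only [Pi.add_apply, Pi.smul_apply, smul_eq_mul]; ring
  have hmidF : ((1:ℝ)/2) • (x' + t • d) + (1 - (1:ℝ)/2) • x ∈ F := by
    rw [hmid]
    exact hF.1 hx' (hray t ht) (by norm_num) (by norm_num) (by norm_num)
  exact (hF.2.2 _ hxB' _ (hF.2.1 hx) (1/2) (by norm_num) (by norm_num) hmidF).1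

lemma helper1 {B F : Set (Fin n → ℝ)} (hF : IsFaceOf F B) {y d : Fin n → ℝ}
    (hy : y ∈ B) (hd : d ∈ recCone B) {s : ℝ} (hs : 0 < s) (hzF : y + s • d ∈ F) :
    y ∈ F ∧ d ∈ recCone F := by
  obtain ⟨h1, h2⟩ := faceA hF hy hd hs hzF
  exact ⟨h1, faceA_rec hF h1 hd h2⟩

lemma face_closed {B F : Set (Fin n → ℝ)} (hBc : IsClosed B) (hF : IsFaceOf F B) :
    IsClosed F := by
  rcases F.eq_empty_or_nonempty with rfl | hne
  · exact isClosed_empty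
  obtain ⟨xx, hxx⟩ := hne.intrinsicInterior hF.1
  obtain ⟨x', hx', rfl⟩ := hxx
  refine isClosed_of_closure_subset fun y hy => ?_
  have hxF : (x' : Fin n → ℝ) ∈ F := Set.mem_preimage.mp (interior_subset hx')
  have hyB : y ∈ B := by
    have : closure F ⊆ B := hBc.closure_subset_iff.mpr hF.2.1
    exact this hy
  have hySpan : y ∈ affineSpan ℝ F := by
    have h1 : closure F ⊆ (affineSpan ℝ F : Set (Fin n → ℝ)) :=
      closure_minimal (subset_affineSpan ℝ F) (affineSpan ℝ F).closed_of_finiteDimensional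
    exact h1 hy
  obtain ⟨ε, hε, hball⟩ := Metric.isOpen_iff.mp isOpen_interior x' hx'
  set δ : ℝ := min 1 (ε / (2 * (dist (x' : Fin n → ℝ) y + 1))) with hδdef
  have hdistnn : (0:ℝ) ≤ dist (x' : Fin n → ℝ) y := dist_nonneg
  have hδpos : 0 < δ := lt_min one_pos (by positivity)
  set w : Fin n → ℝ := δ • ((x' : Fin n → ℝ) - y) + (x' : Fin n → ℝ) with hwdef
  have hwSpan : w ∈ affineSpan ℝ F := by
    have := (affineSpan ℝ F).smul_vsub_vadd_mem δ x'.2 hySpan x'.2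
    simpa [vsub_eq_sub] using this
  have hwdist : dist w (x' : Fin n → ℝ) < ε := by
    have h1 : dist w (x' : Fin n → ℝ) = δ * dist (x' : Fin n → ℝ) y := by
      rw [dist_eq_norm]
      have : w - (x' : Fin n → ℝ) = δ • ((x' : Fin n → ℝ) - y) := by rw [hwdef]; abel
      rw [this, norm_smul, Real.norm_eq_abs, abs_of_pos hδpos, dist_eq_norm]
    rw [h1]
    have h2 : δ ≤ ε / (2 * (dist (x' : Fin n → ℝ) y + 1)) := min_le_right _ _
    have h3 : δ * dist (x' : Fin n → ℝ) y ≤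
        ε / (2 * (dist (x' : Fin n → ℝ) y + 1)) * dist (x' : Fin n → ℝ) y :=
      mul_le_mul_of_nonneg_right h2 hdistnn
    have h4 : ε / (2 * (dist (x' : Fin n → ℝ) y + 1)) * dist (x' : Fin n → ℝ) y < ε := by
      rw [div_mul_eq_mul_div, div_lt_iff₀ (by positivity)]
      nlinarith
    linarith
  have hwF : w ∈ F := by
    have hwmem : (⟨w, hwSpan⟩ : affineSpan ℝ F) ∈ Metric.ball x' ε := by
      rw [Metric.mem_ball, Subtype.dist_eq]
      exact hwdist
    exact Set.mem_preimage.mp (interior_subset (hball hwmem))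
  -- x' = (δ/(1+δ)) • y + (1 - δ/(1+δ)) • w
  have hcombo : (δ / (1 + δ)) • y + (1 - δ / (1 + δ)) • w = (x' : Fin n → ℝ) := by
    funext i
    have h1δ : (1:ℝ) + δ ≠ 0 := by positivity
    simp only [hwdef, Pi.add_apply, Pi.smul_apply, Pi.sub_apply, smul_eq_mul]
    field_simp
    ring
  exact (hF.2.2 y hyB w (hF.2.1 hwF) (δ / (1 + δ)) (by positivity)
    (by rw [div_lt_one (by positivity)]; linarith) (by rw [hcombo]; exact hxF)).1

end S4
namespace S4

open Matrix Set Pointwise Filter Topology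

variable {q : ℕ}

lemma phi_eq {C : Set (Fin q → ℝ)} (hCc : IsClosed C) (hC : Convex ℝ C) (hne : C.Nonempty) :
    PhiMap C = coneOf (lift1 '' C) ∪ lift0 '' recCone C := by
  apply Subset.antisymm
  · intro p hp
    obtain ⟨f, hf, htend⟩ := mem_closure_iff_seq_limit.mp hp
    choose l hl y hy hfeq using fun n => (mem_coneL hC).mp (hf n)
    set t := p (Fin.last q) with ht
    have hlast : ∀ n, f n (Fin.last q) = l n := by
      intro n; rw [hfeq n]; simp
    have hltend : Tendsto l atTop (𝓝 t) := by
      have h1 := (tendsto_pi_nhds.mp htend) (Fin.last q)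
      simpa [hlast] using h1
    have hprojtend : Tendsto (fun n => projq (f n)) atTop (𝓝 (projq p)) := by
      rw [tendsto_pi_nhds]
      intro i
      exact (tendsto_pi_nhds.mp htend) i.castSucc
    have htnn : 0 ≤ t := ge_of_tendsto hltend (Eventually.of_forall hl)
    have hprojf : ∀ n, projq (f n) = l n • y n := by
      intro n; funext i; rw [hfeq n]; simp [projq]
    rcases lt_or_eq_of_le htnn with hpos | hzero
    · left
      have hev : ∀ᶠ n in atTop, 0 < l n := hltend.eventually (eventually_gt_nhds hpos)
      have hg : Tendsto (fun n => (l n)⁻¹ • projq (f n)) atTop (𝓝 (t⁻¹ • projq p)) :=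
        (hltend.inv₀ (ne_of_gt hpos)).smul hprojtend
      have hy0 : t⁻¹ • projq p ∈ C := by
        refine hCc.mem_of_tendsto hg (hev.mono fun n hn => ?_)
        rw [hprojf n, inv_smul_smul₀ (ne_of_gt hn)]
        exact hy n
      refine (mem_coneL hC).mpr ⟨t, le_of_lt hpos, _, hy0, ?_⟩
      refine ext_fin (fun i => ?_) ?_
      · simp only [Pi.smul_apply, lift1_castSucc, smul_eq_mul, projq]
        field_simp
      · simp [← ht]
    · right
      refine ⟨projq p, ?_, ?_⟩
      · intro x hx s hs
        have hltend0 : Tendsto (fun n => s * l n) atTop (𝓝 0) := by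
          have := hltend.const_mul s
          rw [← hzero] at this
          simpa using this
        have hev : ∀ᶠ n in atTop, s * l n < 1 := hltend0.eventually (eventually_lt_nhds one_pos)
        set u : ℕ → Fin q → ℝ := fun n => (1 - s * l n) • x + s • projq (f n) with hu
        have humem : ∀ᶠ n in atTop, u n ∈ C := by
          refine hev.mono fun n hn => ?_
          have h1 : s • projq (f n) = (s * l n) • y n := by
            rw [hprojf n, smul_smul]
          rw [hu]
          simp only
          rw [h1]
          exact hC hx (hy n) (by linarith) (mul_nonneg hs (hl n)) (by ring)
        have hutend : Tendsto u atTop (𝓝 (x + s • projq p)) := by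
          have h2 : Tendsto (fun n => (1 - s * l n)) atTop (𝓝 1) := by
            have h2' : Tendsto (fun n : ℕ => (1:ℝ) - s * l n) atTop (𝓝 (1 - 0)) :=
              Tendsto.sub tendsto_const_nhds hltend0
            simpa using h2'
          have h3 := (h2.smul_const x).add (hprojtend.const_smul s)
          simpa using h3
        exact hCc.mem_of_tendsto hutend humem
      · refine (ext_fin (fun i => ?_) ?_).symm
        · simp [projq]
        · simpa using hzero.symm
  · rintro p (hp | ⟨d, hd, rfl⟩)
    · exact subset_closure hp
    · obtain ⟨x, hx⟩ := hne
      refine mem_closure_iff_seq_limit.mpr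
        ⟨fun n => lift0 d + (1 / ((n : ℝ) + 1)) • lift1 x, fun n => ?_, ?_⟩
      · refine (mem_coneL hC).mpr ⟨1 / ((n : ℝ) + 1), by positivity,
          x + ((n : ℝ) + 1) • d, hd x hx _ (by positivity), ?_⟩
        have hn : ((n : ℝ) + 1) ≠ 0 := by positivity
        refine ext_fin (fun i => ?_) ?_ <;>
          simp only [Pi.add_apply, Pi.smul_apply, lift0_castSucc, lift1_castSucc,
            lift0_last, lift1_last, smul_eq_mul]
        · field_simp; ring
        · simp
      · have h0 : Tendsto (fun n : ℕ => (1 / ((n : ℝ) + 1))) atTop (𝓝 0) :=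
          tendsto_one_div_add_atTop_nhds_zero_nat
        have h1 : Tendsto (fun n : ℕ => lift0 d + (1 / ((n : ℝ) + 1)) • lift1 x) atTop
            (𝓝 (lift0 d + (0:ℝ) • lift1 x)) :=
          Tendsto.add tendsto_const_nhds (h0.smul_const (lift1 x))
        simpa using h1

lemma memPhi_cases {C : Set (Fin q → ℝ)} (hCc : IsClosed C) (hC : Convex ℝ C) (hne : C.Nonempty)
    {p : Fin (q + 1) → ℝ} (hp : p ∈ PhiMap C) :
    (0 < p (Fin.last q) ∧ (p (Fin.last q))⁻¹ • projq p ∈ C ∧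
        p = (p (Fin.last q)) • lift1 ((p (Fin.last q))⁻¹ • projq p)) ∨
      (p (Fin.last q) = 0 ∧ projq p ∈ recCone C ∧ p = lift0 (projq p)) := by
  rw [phi_eq hCc hC hne] at hp
  rcases hp with hp | ⟨d, hd, rfl⟩
  · obtain ⟨l, hl, y, hy, rfl⟩ := (mem_coneL hC).mp hp
    rcases eq_or_lt_of_le hl with h0 | h0
    · right
      rw [← h0]
      refine ⟨by simp, ?_, ?_⟩
      · have : projq ((0:ℝ) • lift1 y) = 0 := by funext i; simp [projq]
        rw [this]; exact zero_mem_recCone C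
      · refine ext_fin (fun i => ?_) ?_ <;> simp [projq]
    · left
      have hlast : ((l • lift1 y) (Fin.last q)) = l := by simp
      have hproj : projq (l • lift1 y) = l • y := by funext i; simp [projq]
      rw [hlast, hproj, inv_smul_smul₀ (ne_of_gt h0)]
      exact ⟨h0, hy, rfl⟩
  · right
    exact ⟨by simp, by simpa using hd, by simp⟩

lemma lift0_smul (c : ℝ) (d : Fin q → ℝ) : c • lift0 d = lift0 (c • d) := by
  refine ext_fin (fun i => ?_) ?_ <;> simp

lemma phi_smul {C : Set (Fin q → ℝ)} (hCc : IsClosed C) (hC : Convex ℝ C) (hne : C.Nonempty)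
    {p : Fin (q + 1) → ℝ} (hp : p ∈ PhiMap C) {c : ℝ} (hc : 0 ≤ c) : c • p ∈ PhiMap C := by
  rw [phi_eq hCc hC hne] at hp ⊢
  rcases hp with hp | ⟨d, hd, rfl⟩
  · obtain ⟨l, hl, y, hy, rfl⟩ := (mem_coneL hC).mp hp
    exact Or.inl ((mem_coneL hC).mpr ⟨c * l, by positivity, y, hy, (smul_smul c l _)⟩)
  · right
    exact ⟨c • d, recCone_smul hd hc, (lift0_smul c d).symm⟩

lemma zero_mem_phi {C : Set (Fin q → ℝ)} (hC : Convex ℝ C) (hne : C.Nonempty) :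
    (0 : Fin (q + 1) → ℝ) ∈ PhiMap C := by
  obtain ⟨x, hx⟩ := hne
  exact subset_closure ((mem_coneL hC).mpr ⟨0, le_refl _, x, hx, (zero_smul ℝ _).symm⟩)

lemma face_zero_mem {C : Set (Fin q → ℝ)} (hCc : IsClosed C) (hC : Convex ℝ C) (hne : C.Nonempty)
    {E : Set (Fin (q + 1) → ℝ)} (hE : IsFaceOf E (PhiMap C)) {p : Fin (q + 1) → ℝ}
    (hp : p ∈ E) : (0 : Fin (q + 1) → ℝ) ∈ E := by
  have h2 : (2:ℝ) • p ∈ PhiMap C := phi_smul hCc hC hne (hE.2.1 hp) (by norm_num)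
  have h0 : (0 : Fin (q + 1) → ℝ) ∈ PhiMap C := zero_mem_phi hC hne
  have hcombo : ((1:ℝ)/2) • ((2:ℝ) • p) + (1 - (1:ℝ)/2) • (0 : Fin (q + 1) → ℝ) = p := by
    rw [smul_smul]; norm_num
  exact (hE.2.2 _ h2 _ h0 (1/2) (by norm_num) (by norm_num)
    (by rw [hcombo]; exact hp)).2

lemma face_smul {C : Set (Fin q → ℝ)} (hCc : IsClosed C) (hC : Convex ℝ C) (hne : C.Nonempty)
    {E : Set (Fin (q + 1) → ℝ)} (hE : IsFaceOf E (PhiMap C)) {p : Fin (q + 1) → ℝ}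
    (hp : p ∈ E) {c : ℝ} (hc : 0 ≤ c) : c • p ∈ E := by
  rcases eq_or_lt_of_le hc with h0 | h0
  · rw [← h0, zero_smul]
    exact face_zero_mem hCc hC hne hE hp
  rcases lt_trichotomy c 1 with h1 | h1 | h1
  · have hcK : c • p ∈ PhiMap C := phi_smul hCc hC hne (hE.2.1 hp) hc
    have h2K : (2:ℝ) • p ∈ PhiMap C := phi_smul hCc hC hne (hE.2.1 hp) (by norm_num)
    have h2c : (0:ℝ) < 2 - c := by linarith
    have ha : (0:ℝ) < 1 / (2 - c) := by positivity
    have ha1 : 1 / (2 - c) < 1 := by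
      rw [div_lt_one (by linarith)]; linarith
    have hcombo : (1 / (2 - c)) • (c • p) + (1 - 1 / (2 - c)) • ((2:ℝ) • p) = p := by
      rw [smul_smul, smul_smul, ← add_smul]
      have h2c' : (2:ℝ) - c ≠ 0 := ne_of_gt h2c
      have : 1 / (2 - c) * c + (1 - 1 / (2 - c)) * 2 = 1 := by
        field_simp; ring
      rw [this, one_smul]
    exact (hE.2.2 _ hcK _ h2K _ ha ha1 (by rw [hcombo]; exact hp)).1
  · rw [h1, one_smul]; exact hp
  · have hcK : c • p ∈ PhiMap C := phi_smul hCc hC hne (hE.2.1 hp) hc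
    have h0K : (0 : Fin (q + 1) → ℝ) ∈ PhiMap C := zero_mem_phi hC hne
    have ha : (0:ℝ) < 1 / c := by positivity
    have ha1 : 1 / c < 1 := by rw [div_lt_one (by linarith)]; linarith
    have hcombo : (1 / c) • (c • p) + (1 - 1 / c) • (0 : Fin (q + 1) → ℝ) = p := by
      rw [smul_smul, smul_zero, add_zero]
      have : 1 / c * c = 1 := by field_simp
      rw [this, one_smul]
    exact (hE.2.2 _ hcK _ h0K _ ha ha1 (by rw [hcombo]; exact hp)).1

end S4
namespace S4

open Matrix Set Pointwise Filter Topology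

variable {q : ℕ}

lemma memPhi_elim' {C : Set (Fin q → ℝ)} (hC : Convex ℝ C) {p : Fin (q + 1) → ℝ}
    (hp : p ∈ coneOf (lift1 '' C) ∪ lift0 '' recCone C) :
    (∃ t : ℝ, ∃ y, 0 < t ∧ y ∈ C ∧ p = t • lift1 y) ∨ ∃ d ∈ recCone C, p = lift0 d := by
  rcases hp with hp | ⟨d, hd, rfl⟩
  · obtain ⟨t, htnn, y, hy, rfl⟩ := (mem_coneL hC).mp hp
    rcases eq_or_lt_of_le htnn with ht | ht
    · right
      refine ⟨0, zero_mem_recCone C, ?_⟩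
      rw [← ht]
      exact ext_fin (fun i => by simp) (by simp)
    · exact Or.inl ⟨t, y, ht, hy, rfl⟩
  · exact Or.inr ⟨d, hd, rfl⟩

lemma lift1_mem_phi {C : Set (Fin q → ℝ)} (hC : Convex ℝ C) {x : Fin q → ℝ} (hx : x ∈ C) :
    lift1 x ∈ PhiMap C :=
  subset_closure ((mem_coneL hC).mpr ⟨1, zero_le_one, x, hx, (one_smul _ _).symm⟩)

lemma part1_face {B F : Set (Fin q → ℝ)} (hBc : IsClosed B) (hBconv : Convex ℝ B)
    (hF : IsFaceOf F B) (hFne : F.Nonempty) :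
    ∀ p1 ∈ PhiMap B, ∀ p2 ∈ PhiMap B, ∀ l : ℝ, 0 < l → l < 1 →
      l • p1 + (1 - l) • p2 ∈ PhiMap F → p1 ∈ PhiMap F := by
  have hFc := face_closed hBc hF
  have hBne : B.Nonempty := hFne.imp fun x hx => hF.2.1 hx
  have hFdec := phi_eq hFc hF.1 hFne
  have hBdec := phi_eq hBc hBconv hBne
  intro p1 hp1 p2 hp2 l hl0 hl1 hm
  rw [hBdec] at hp1 hp2
  have rec_sub : ∀ d ∈ recCone F, lift0 d ∈ PhiMap F := fun d hd => by
    rw [hFdec]; exact Or.inr ⟨d, hd, rfl⟩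
  rw [hFdec] at hm
  rcases memPhi_elim' hBconv hp1 with ⟨t1, y1, ht1, hy1, rfl⟩ | ⟨d1, hd1, rfl⟩
  · -- p1 = t1 • lift1 y1, t1 > 0
    rcases memPhi_elim' hBconv hp2 with ⟨t2, y2, ht2, hy2, rfl⟩ | ⟨d2, hd2, rfl⟩
    · -- both conic
      rcases hm with hm | ⟨e, he, hmeq⟩
      · obtain ⟨s, hsnn, z, hz, hmeq⟩ := (mem_coneL hF.1).mp hm
        have hs : l * t1 + (1 - l) * t2 = s := by
          have h1 := congrFun hmeq (Fin.last q)
          simpa using h1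
        have hspos : 0 < s := by nlinarith
        set a := l * t1 / s with ha
        have ha0 : 0 < a := by positivity
        have ha1 : a < 1 := by
          rw [ha, div_lt_one hspos]; nlinarith
        have hzeq : a • y1 + (1 - a) • y2 = z := by
          funext i
          have h2 := congrFun hmeq i.castSucc
          simp only [Pi.add_apply, Pi.smul_apply, lift1_castSucc, smul_eq_mul] at h2 ⊢
          have hs0 : s ≠ 0 := ne_of_gt hspos
          rw [ha]
          field_simp
          linear_combination h2 - y2 i * hs
        have hy1F := (hF.2.2 y1 hy1 y2 hy2 a ha0 ha1 (by rw [hzeq]; exact hz)).1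
        exact subset_closure ((mem_coneL hF.1).mpr ⟨t1, le_of_lt ht1, y1, hy1F, rfl⟩)
      · exfalso
        have h1 := congrFun hmeq (Fin.last q)
        simp only [Pi.add_apply, Pi.smul_apply, lift1_last, lift0_last, smul_eq_mul] at h1
        nlinarith
    · -- p1 conic, p2 = lift0 d2
      rcases hm with hm | ⟨e, he, hmeq⟩
      · obtain ⟨s, hsnn, z, hz, hmeq⟩ := (mem_coneL hF.1).mp hm
        have hs : l * t1 = s := by
          have h1 := congrFun hmeq (Fin.last q)
          simpa using h1
        have hspos : 0 < s := by nlinarith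
        have hzeq : y1 + ((1 - l) / s) • d2 = z := by
          funext i
          have h2 := congrFun hmeq i.castSucc
          simp only [Pi.add_apply, Pi.smul_apply, lift1_castSucc, lift0_castSucc,
            smul_eq_mul] at h2 ⊢
          have hs0 : s ≠ 0 := ne_of_gt hspos
          field_simp
          linear_combination h2 - y1 i * hs
        have hy1F := (helper1 hF hy1 hd2 (show (0:ℝ) < (1 - l) / s from div_pos (by linarith) hspos)
          (by rw [hzeq]; exact hz)).1
        exact subset_closure ((mem_coneL hF.1).mpr ⟨t1, le_of_lt ht1, y1, hy1F, rfl⟩)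
      · exfalso
        have h1 := congrFun hmeq (Fin.last q)
        simp only [Pi.add_apply, Pi.smul_apply, lift1_last, lift0_last, smul_eq_mul] at h1
        nlinarith
  · -- p1 = lift0 d1
    rcases memPhi_elim' hBconv hp2 with ⟨t2, y2, ht2, hy2, rfl⟩ | ⟨d2, hd2, rfl⟩
    · rcases hm with hm | ⟨e, he, hmeq⟩
      · obtain ⟨s, hsnn, z, hz, hmeq⟩ := (mem_coneL hF.1).mp hm
        have hs : (1 - l) * t2 = s := by
          have h1 := congrFun hmeq (Fin.last q)
          simpa using h1
        have hspos : 0 < s := by nlinarith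
        have hzeq : y2 + (l / s) • d1 = z := by
          funext i
          have h2 := congrFun hmeq i.castSucc
          simp only [Pi.add_apply, Pi.smul_apply, lift1_castSucc, lift0_castSucc,
            smul_eq_mul] at h2 ⊢
          have hs0 : s ≠ 0 := ne_of_gt hspos
          field_simp
          linear_combination h2 - y2 i * hs
        have hd1F := (helper1 hF hy2 hd1 (show (0:ℝ) < l / s from div_pos hl0 hspos)
          (by rw [hzeq]; exact hz)).2
        exact rec_sub d1 hd1F
      · exfalso
        have h1 := congrFun hmeq (Fin.last q)
        simp only [Pi.add_apply, Pi.smul_apply, lift1_last, lift0_last, smul_eq_mul] at h1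
        nlinarith
    · -- both lift0
      obtain ⟨x, hx⟩ := hFne
      set e0 : Fin q → ℝ := l • d1 + (1 - l) • d2 with he0
      have hme : l • lift0 d1 + (1 - l) • lift0 d2 = lift0 e0 :=
        ext_fin (fun i => by simp [he0]) (by simp)
      have he0F : e0 ∈ recCone F := by
        rcases hm with hm | ⟨e, he, hmeq⟩
        · obtain ⟨s, hsnn, z, hz, hmeq⟩ := (mem_coneL hF.1).mp hm
          have hs : s = 0 := by
            have h1 := congrFun hmeq (Fin.last q)
            simpa using h1.symm
          have : e0 = 0 := by
            have h2 : lift0 e0 = (0:ℝ) • lift1 z := by rw [← hme, hmeq, hs]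
            have h3 := congrArg projq h2
            rw [projq_lift0] at h3; rw [h3]; funext i; simp [projq]
          rw [this]
          exact zero_mem_recCone F
        · have h2 : lift0 e0 = lift0 e := by rw [← hme, hmeq]
          have h3 : e0 = e := by
            have := congrArg projq h2; simpa using this
          rw [h3]; exact he
      have hxe : x + e0 ∈ F := by
        have := he0F x hx 1 zero_le_one; rwa [one_smul] at this
      have hxB : x ∈ B := hF.2.1 hx
      have hxd1B : x + d1 ∈ B := by
        have := hd1 x hxB 1 zero_le_one; rwa [one_smul] at this
      have hxd2B : x + d2 ∈ B := by
        have := hd2 x hxB 1 zero_le_one; rwa [one_smul] at this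
      have hcomb : l • (x + d1) + (1 - l) • (x + d2) = x + e0 := by
        funext i; simp only [he0, Pi.add_apply, Pi.smul_apply, smul_eq_mul]; ring
      have hxd1F := (hF.2.2 _ hxd1B _ hxd2B l hl0 hl1 (by rw [hcomb]; exact hxe)).1
      have hd1F := (helper1 hF hxB hd1 one_pos (by rw [one_smul]; exact hxd1F)).2
      exact rec_sub d1 hd1F

lemma part3 {B F : Set (Fin q → ℝ)} (hBc : IsClosed B) (hBconv : Convex ℝ B)
    (hF : IsFaceOf F B) (hFne : F.Nonempty) : projq '' (PhiMap F ∩ lift1 '' B) = F := by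
  have hFc := face_closed hBc hF
  have hFdec := phi_eq hFc hF.1 hFne
  apply Subset.antisymm
  · rintro _ ⟨w, ⟨hw1, y, hyB, rfl⟩, rfl⟩
    rw [hFdec] at hw1
    rcases hw1 with hw | ⟨d, hd, heq⟩
    · obtain ⟨s, hsnn, z, hz, heq⟩ := (mem_coneL hF.1).mp hw
      have hs1 : s = 1 := by
        have := congrFun heq (Fin.last q); simpa using this.symm
      have hyz : y = z := by
        have h2 := congrArg projq heq
        have h3 : projq ((s : ℝ) • lift1 z) = s • z := by funext i; simp [projq]
        rw [projq_lift1, h3, hs1, one_smul] at h2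
        exact h2
      rw [projq_lift1, hyz]
      exact hz
    · exfalso
      have := congrFun heq (Fin.last q)
      simp at this
  · intro y hy
    exact ⟨lift1 y, ⟨lift1_mem_phi hF.1 hy, ⟨y, hF.2.1 hy, rfl⟩⟩, projq_lift1 y⟩

def lift0L (q : ℕ) : (Fin q → ℝ) →ₗ[ℝ] (Fin (q + 1) → ℝ) where
  toFun := lift0
  map_add' a b := (ext_fin (fun i => by simp) (by simp)).symm
  map_smul' c a := by simpa using (lift0_smul c a).symm

lemma lift1_continuous : Continuous (lift1 : (Fin q → ℝ) → Fin (q + 1) → ℝ) := by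
  have h : (lift1 : (Fin q → ℝ) → Fin (q + 1) → ℝ) = fun y => lift0L q y + lift1 0 := by
    funext y
    exact ext_fin (fun i => by simp [lift0L]) (by simp [lift0L])
  rw [h]
  exact ((lift0L q).continuous_of_finiteDimensional).add continuous_const

lemma part2 {B : Set (Fin q → ℝ)} (hBc : IsClosed B) (hBconv : Convex ℝ B)
    {E : Set (Fin (q + 1) → ℝ)} (hE : IsFaceOf E (PhiMap B)) (hEn : ¬ E ⊆ lift0 '' recCone B) :
    IsFaceOf (projq '' (E ∩ lift1 '' B)) B ∧ (projq '' (E ∩ lift1 '' B)).Nonempty ∧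
      PhiMap (projq '' (E ∩ lift1 '' B)) = E := by
  rcases B.eq_empty_or_nonempty with rfl | hBne
  · exfalso
    apply hEn
    have hempty : PhiMap (∅ : Set (Fin q → ℝ)) = ∅ := by
      simp [PhiMap, coneOf]
    intro p hp
    exact absurd (hE.2.1 hp) (by rw [hempty]; exact notMem_empty p)
  set F : Set (Fin q → ℝ) := B ∩ lift1 ⁻¹' E with hFdef
  have hproj : projq '' (E ∩ lift1 '' B) = F := by
    apply Subset.antisymm
    · rintro _ ⟨w, ⟨hwE, y, hyB, rfl⟩, rfl⟩
      rw [projq_lift1]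
      exact ⟨hyB, hwE⟩
    · rintro y ⟨hyB, hyE⟩
      exact ⟨lift1 y, ⟨hyE, y, hyB, rfl⟩, projq_lift1 y⟩
  rw [hproj]
  have hBdec := phi_eq hBc hBconv hBne
  obtain ⟨p, hpE, hpn⟩ := not_subset.mp hEn
  have hpK := hE.2.1 hpE
  have hFne : F.Nonempty := by
    rcases memPhi_cases hBc hBconv hBne hpK with ⟨ht, hy, heq⟩ | ⟨ht, hd, heq⟩
    · set t := p (Fin.last q) with htdef
      set w := t⁻¹ • projq p with hwdef
      refine ⟨w, hy, ?_⟩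
      show lift1 w ∈ E
      have h1 : lift1 w = t⁻¹ • p := by
        rw [heq, smul_smul, inv_mul_cancel₀ (ne_of_gt ht), one_smul]
      rw [h1]
      exact face_smul hBc hBconv hBne hE hpE (inv_nonneg.mpr (le_of_lt ht))
    · exact absurd ⟨projq p, hd, heq.symm⟩ hpn
  have hFface : IsFaceOf F B := by
    refine ⟨?_, fun y hy => hy.1, ?_⟩
    · intro y hy z hz a b ha hb hab
      refine ⟨hBconv hy.1 hz.1 ha hb hab, ?_⟩
      show lift1 _ ∈ E
      rw [← lift1_combo hab]
      exact hE.1 hy.2 hz.2 ha hb hab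
    · intro y hyB z hzB l hl0 hl1 hmem
      have h1 : l • lift1 y + (1 - l) • lift1 z ∈ E := by
        rw [lift1_combo (by ring)]
        exact hmem.2
      have hyK : lift1 y ∈ PhiMap B := lift1_mem_phi hBconv hyB
      have hzK : lift1 z ∈ PhiMap B := lift1_mem_phi hBconv hzB
      have h2 := hE.2.2 _ hyK _ hzK l hl0 hl1 h1
      exact ⟨⟨hyB, h2.1⟩, ⟨hzB, h2.2⟩⟩
  have hEc : IsClosed E := face_closed isClosed_closure hE
  have hFc : IsClosed F := hBc.inter (hEc.preimage lift1_continuous)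
  have hEdec : E = coneOf (lift1 '' F) ∪ lift0 '' recCone F := by
    apply Subset.antisymm
    · intro p' hp'
      rcases memPhi_cases hBc hBconv hBne (hE.2.1 hp') with ⟨ht, hy, heq⟩ | ⟨ht, hd, heq⟩
      · left
        set t := p' (Fin.last q) with htdef
        set w := t⁻¹ • projq p' with hwdef
        have h1 : lift1 w = t⁻¹ • p' := by
          rw [heq, smul_smul, inv_mul_cancel₀ (ne_of_gt ht), one_smul]
        have hwE : lift1 w ∈ E := by
          rw [h1]
          exact face_smul hBc hBconv hBne hE hp' (inv_nonneg.mpr (le_of_lt ht))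
        exact (mem_coneL hFface.1).mpr ⟨t, le_of_lt ht, w, ⟨hy, hwE⟩, heq⟩
      · right
        refine ⟨projq p', ?_, heq.symm⟩
        intro x hx s hs
        refine ⟨hd x hx.1 s hs, ?_⟩
        show lift1 _ ∈ E
        have h2 : ((1:ℝ)/2) • (s • p') + ((1:ℝ)/2) • lift1 x
            = ((1:ℝ)/2) • lift1 (x + s • projq p') := by
          refine ext_fin (fun i => ?_) ?_ <;>
            simp only [Pi.add_apply, Pi.smul_apply, lift1_castSucc, lift1_last, smul_eq_mul,
              projq]
          · ring
          · rw [ht]; ring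
        have h3 : ((1:ℝ)/2) • lift1 (x + s • projq p') ∈ E := by
          rw [← h2]
          exact hE.1 (face_smul hBc hBconv hBne hE hp' hs) hx.2 (by norm_num) (by norm_num)
            (by norm_num)
        have h4 := face_smul hBc hBconv hBne hE h3 (by norm_num : (0:ℝ) ≤ 2)
        rwa [smul_smul, (by norm_num : (2:ℝ) * (1/2) = 1), one_smul] at h4
    · rintro p' (hp' | ⟨d, hd, rfl⟩)
      · obtain ⟨s, hsnn, z, hz, rfl⟩ := (mem_coneL hFface.1).mp hp'
        exact face_smul hBc hBconv hBne hE hz.2 hsnn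
      · obtain ⟨x, hx⟩ := hFne
        have hdB : d ∈ recCone B := recCone_subset hBc hBconv (fun y hy => hy.1) ⟨x, hx⟩ hd
        have hxdF : x + d ∈ F := by
          have := hd x hx 1 zero_le_one; rwa [one_smul] at this
        have hK1 : lift0 d ∈ PhiMap B := by rw [hBdec]; exact Or.inr ⟨d, hdB, rfl⟩
        have hK2 : lift1 x ∈ PhiMap B := lift1_mem_phi hBconv hx.1
        have hcombo : ((1:ℝ)/2) • lift0 d + (1 - (1:ℝ)/2) • lift1 x
            = ((1:ℝ)/2) • lift1 (x + d) := by
          refine ext_fin (fun i => ?_) ?_ <;>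
            simp only [Pi.add_apply, Pi.smul_apply, lift1_castSucc, lift1_last, lift0_castSucc,
              lift0_last, smul_eq_mul]
          · ring
          · ring
        have hmem2 : ((1:ℝ)/2) • lift1 (x + d) ∈ E :=
          face_smul hBc hBconv hBne hE hxdF.2 (by norm_num)
        exact (hE.2.2 _ hK1 _ hK2 (1/2) (by norm_num) (by norm_num)
          (by rw [hcombo]; exact hmem2)).1
  exact ⟨hFface, hFne, (phi_eq hFc hFface.1 hFne).trans hEdec.symm⟩

end S4
namespace S4

open Matrix Set Pointwise Filter Topology

variable {q : ℕ}

lemma vspan_eq {m : ℕ} {S : Set (Fin m → ℝ)} (h0 : (0 : Fin m → ℝ) ∈ S) :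
    vectorSpan ℝ S = Submodule.span ℝ S := by
  apply le_antisymm
  · rw [vectorSpan_def, Submodule.span_le]
    rintro v hv
    rw [Set.mem_vsub] at hv
    obtain ⟨a, ha, b, hb, rfl⟩ := hv
    rw [SetLike.mem_coe, vsub_eq_sub]
    exact Submodule.sub_mem _ (Submodule.subset_span ha) (Submodule.subset_span hb)
  · rw [Submodule.span_le]
    intro x hx
    have h1 : x -ᵥ (0 : Fin m → ℝ) ∈ S -ᵥ S := Set.vsub_mem_vsub hx h0
    rw [vsub_eq_sub, sub_zero] at h1
    rw [SetLike.mem_coe, vectorSpan_def]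
    exact Submodule.subset_span h1

lemma sdim_phi {C : Set (Fin q → ℝ)} (hC : Convex ℝ C) (hne : C.Nonempty) :
    sdim (PhiMap C) = sdim C + 1 := by
  obtain ⟨x, hx⟩ := hne
  set V : Submodule ℝ (Fin q → ℝ) := vectorSpan ℝ C with hVdef
  have hinj : Function.Injective (lift0L q) := by
    intro a b hab
    have h1 := congrArg projq hab
    simpa [lift0L] using h1
  have hspan : Submodule.span ℝ (lift1 '' C)
      = (V.map (lift0L q)) ⊔ Submodule.span ℝ {lift1 x} := by
    apply le_antisymm
    · rw [Submodule.span_le]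
      rintro _ ⟨y, hy, rfl⟩
      have h1 : lift1 y = lift0L q (y - x) + lift1 x :=
        ext_fin (fun i => by simp [lift0L]) (by simp [lift0L])
      rw [SetLike.mem_coe, h1]
      refine Submodule.add_mem _ (Submodule.mem_sup_left (Submodule.mem_map_of_mem ?_))
        (Submodule.mem_sup_right (Submodule.subset_span (Set.mem_singleton _)))
      rw [hVdef, vectorSpan_def]
      refine Submodule.subset_span ?_
      have h2 := Set.vsub_mem_vsub hy hx
      rwa [vsub_eq_sub] at h2
    · refine sup_le ?_ ?_
      · rw [hVdef, vectorSpan_def, Submodule.map_span, Submodule.span_le]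
        rintro _ ⟨v, hv, rfl⟩
        rw [Set.mem_vsub] at hv
        obtain ⟨a, ha, b, hb, rfl⟩ := hv
        have h1 : lift0L q (a -ᵥ b) = lift1 a - lift1 b := by
          rw [vsub_eq_sub]
          exact ext_fin (fun i => by simp [lift0L]) (by simp [lift0L])
        rw [SetLike.mem_coe, h1]
        exact Submodule.sub_mem _ (Submodule.subset_span ⟨a, ha, rfl⟩)
          (Submodule.subset_span ⟨b, hb, rfl⟩)
      · rw [Submodule.span_le, Set.singleton_subset_iff]
        exact Submodule.subset_span ⟨x, hx, rfl⟩
  have hdisj : (V.map (lift0L q)) ⊓ Submodule.span ℝ {lift1 x} = ⊥ := by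
    rw [eq_bot_iff]
    rintro w hw
    obtain ⟨hw1, hw2⟩ := Submodule.mem_inf.mp hw
    obtain ⟨c, rfl⟩ := Submodule.mem_span_singleton.mp hw2
    obtain ⟨u, hu, heq⟩ := hw1
    have hc : c = 0 := by
      have h1 := congrFun heq (Fin.last q)
      simpa [lift0L] using h1.symm
    rw [hc, zero_smul]
    exact Submodule.zero_mem ⊥
  have hrank : Module.finrank ℝ (V.map (lift0L q)) = Module.finrank ℝ V :=
    ((Submodule.equivMapOfInjective _ hinj V).finrank_eq).symm
  have hone : Module.finrank ℝ (Submodule.span ℝ {lift1 x}) = 1 := by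
    refine finrank_span_singleton ?_
    intro h
    have h1 := congrFun h (Fin.last q)
    simp at h1
  have h0 : (0 : Fin (q + 1) → ℝ) ∈ PhiMap C := zero_mem_phi hC ⟨x, hx⟩
  have e1 : vectorSpan ℝ (PhiMap C) = Submodule.span ℝ (PhiMap C) := vspan_eq h0
  have e2 : Submodule.span ℝ (PhiMap C) = Submodule.span ℝ (lift1 '' C) := by
    apply le_antisymm
    · rw [Submodule.span_le]
      refine closure_minimal ?_ (Submodule.closed_of_finiteDimensional _)
      intro p hp
      obtain ⟨l, hl, y, hy, rfl⟩ := (mem_coneL hC).mp hp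
      exact Submodule.smul_mem _ _ (Submodule.subset_span ⟨y, hy, rfl⟩)
    · rw [Submodule.span_le]
      rintro _ ⟨y, hy, rfl⟩
      exact Submodule.subset_span (lift1_mem_phi hC hy)
  have hfin := Submodule.finrank_sup_add_finrank_inf_eq (V.map (lift0L q))
    (Submodule.span ℝ {lift1 x})
  rw [hdisj, hrank, hone] at hfin
  unfold sdim
  rw [e1, e2, hspan]
  have hb : Module.finrank ℝ (⊥ : Submodule ℝ (Fin (q + 1) → ℝ)) = 0 := finrank_bot ℝ _
  rw [hb] at hfin
  rw [← hVdef]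
  omega

end S4

open S4

/-- `Φ` is an inclusion-invariant bijection between the nonempty faces of a
polyhedron `B` and the faces `E` of `Φ(B)` with `E ⊄ 0⁺B × {0}`, with inverse
`E ↦ p[E ∩ (B × {1})]`, and `dim Φ(F) = dim F + 1`. -/
theorem stmt4 (q : ℕ) (B : Set (Fin q → ℝ)) (hB : IsPolyhedron B) :
    (∀ F, IsFaceOf F B → F.Nonempty →
      IsFaceOf (PhiMap F) (PhiMap B) ∧ ¬ PhiMap F ⊆ lift0 '' recCone B) ∧
    (∀ E, IsFaceOf E (PhiMap B) → ¬ E ⊆ lift0 '' recCone B →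
      IsFaceOf (projq '' (E ∩ lift1 '' B)) B ∧ (projq '' (E ∩ lift1 '' B)).Nonempty ∧
        PhiMap (projq '' (E ∩ lift1 '' B)) = E) ∧
    (∀ F, IsFaceOf F B → F.Nonempty → projq '' (PhiMap F ∩ lift1 '' B) = F) ∧
    (∀ F1 F2, IsFaceOf F1 B → F1.Nonempty → IsFaceOf F2 B → F2.Nonempty →
      (F1 ⊆ F2 ↔ PhiMap F1 ⊆ PhiMap F2)) ∧
    (∀ F, IsFaceOf F B → F.Nonempty → sdim (PhiMap F) = sdim F + 1) := by

  have hBc := poly_closed hB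
  have hBconv := poly_convex hB
  refine ⟨?_, ?_, ?_, ?_, ?_⟩
  · intro F hF hFne
    constructor
    · refine ⟨(coneL_convex hF.1).closure, phiMap_mono hF.2.1, fun p1 hp1 p2 hp2 l h0 h1 hm =>
        ⟨part1_face hBc hBconv hF hFne p1 hp1 p2 hp2 l h0 h1 hm,
         part1_face hBc hBconv hF hFne p2 hp2 p1 hp1 (1 - l) (by linarith) (by linarith) ?_⟩⟩
      have hswap : (1 - l) • p2 + (1 - (1 - l)) • p1 = l • p1 + (1 - l) • p2 := by
        rw [sub_sub_cancel]; exact add_comm _ _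
      rw [hswap]
      exact hm
    · intro hsub
      obtain ⟨x, hx⟩ := hFne
      have h1 : lift1 x ∈ PhiMap F := lift1_mem_phi hF.1 hx
      obtain ⟨d, hd, heq⟩ := hsub h1
      have h2 := congrFun heq (Fin.last q)
      simp at h2
  · intro E hE hEn
    exact part2 hBc hBconv hE hEn
  · intro F hF hFne
    exact part3 hBc hBconv hF hFne
  · intro F1 F2 h1 hne1 h2 hne2
    constructor
    · exact fun h => phiMap_mono h
    · intro h
      have e1 := part3 hBc hBconv h1 hne1
      have e2 := part3 hBc hBconv h2 hne2
      rw [← e1, ← e2]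
      exact image_mono (inter_subset_inter_left _ h)
  · intro F hF hFne
    exact sdim_phi hF.1 hFne
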